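/- Let $Q$ be a probability distribution on non-negative integers with moment generating function $\psi(x) = \sum_{k \geq 0} Q(k) x^k$, and suppose $\psi(\rho) < \rho$ for some $\rho > 1$. Let $Z$ be the total number of vertices in a Galton–Watson tree with offspring distribution $Q$. Then for every real $t \geq 1$, $\mathbb{P}(Z \geq t) \leq \rho \left(\frac{\psi(\rho)}{\rho}\right)^t$. -/

import Mathlib

open MeasureTheory ProbabilityTheory

/-- Tail bound for the total progeny of a subcritical Galton–Watson tree, in the
equivalent random-walk formulation: if `Y i` are i.i.d. with offspring law `Q`,
`S t = 1 + ∑_{i<t} (Y i - 1)`, and `Z` is the hitting time of `0` by `S` (the total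
progeny), then for real `t ≥ 1`, `ℙ(Z ≥ t) ≤ ρ (ψ(ρ)/ρ)^t` whenever `ψ(ρ) < ρ`
for some `ρ > 1`, where `ψ` is the generating function of `Q`.
The event `{Z ≥ t}` is `{ω | S u ω ≠ 0 for all integers 1 ≤ u < t}`. -/
theorem gw_total_progeny_tail {Ω : Type*} [MeasureSpace Ω]
    [IsProbabilityMeasure (volume : Measure Ω)]
    (Q : PMF ℕ) (Y : ℕ → Ω → ℕ) (hmeas : ∀ i, Measurable (Y i))
    (hiid : ∀ i, Measure.map (Y i) volume = Q.toMeasure)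
    (hindep : iIndepFun Y)
    (ρ : ℝ) (hρ : 1 < ρ)
    (hsum : Summable (fun k => (Q k).toReal * ρ ^ k))
    (hsub : (∑' k, (Q k).toReal * ρ ^ k) < ρ)
    (t : ℝ) (ht : 1 ≤ t) :
    (volume {ω : Ω | ∀ u : ℕ, 1 ≤ u → (u : ℝ) < t →
        1 + ∑ i ∈ Finset.range u, ((Y i ω : ℤ) - 1) ≠ 0}).toReal ≤
      ρ * ((∑' k, (Q k).toReal * ρ ^ k) / ρ) ^ t := by
  set ψ : ℝ := ∑' k, (Q k).toReal * ρ ^ k with hψdef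
  have hρ0 : (0:ℝ) < ρ := lt_trans one_pos hρ
  -- ψ ≥ 1
  have hQsum : Summable (fun k => (Q k).toReal) :=
    ENNReal.summable_toReal (by rw [Q.tsum_coe]; exact ENNReal.one_ne_top)
  have hQtsum : (∑' k, (Q k).toReal) = 1 := by
    rw [← ENNReal.tsum_toReal_eq (fun a => (Q.apply_lt_top a).ne), Q.tsum_coe,
      ENNReal.toReal_one]
  have hψ1 : (1:ℝ) ≤ ψ := by
    rw [← hQtsum]
    refine Summable.tsum_le_tsum (fun k => ?_) hQsum hsum
    nth_rewrite 1 [← mul_one ((Q k).toReal)]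
    exact mul_le_mul_of_nonneg_left (one_le_pow₀ hρ.le) ENNReal.toReal_nonneg
  have hψ0 : (0:ℝ) < ψ := lt_of_lt_of_le one_pos hψ1
  -- choose n
  set n : ℕ := ⌈t⌉₊ - 1 with hndef
  have hceil : 1 ≤ ⌈t⌉₊ := Nat.one_le_ceil_iff.mpr (lt_of_lt_of_le one_pos ht)
  have hn1 : (n : ℝ) + 1 = (⌈t⌉₊ : ℝ) := by
    rw [hndef]; push_cast [hceil]; ring
  have hnlt : (n : ℝ) < t := by
    have := Nat.ceil_lt_add_one (le_trans zero_le_one ht)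
    linarith [hn1]
  have hnge : t - 1 ≤ (n : ℝ) := by
    have := Nat.le_ceil t
    linarith [hn1]
  -- ENNReal setup
  set r : ENNReal := ENNReal.ofReal ρ with hrdef
  have hr1 : 1 ≤ r := ENNReal.one_le_ofReal.mpr hρ.le
  have hr0 : r ≠ 0 := by
    intro h; rw [hrdef, ENNReal.ofReal_eq_zero] at h; linarith
  have hrtop : r ≠ ⊤ := ENNReal.ofReal_ne_top
  set X : ℕ → Ω → ENNReal := fun i ω => r ^ (Y i ω) with hXdef
  have hmeasr : Measurable (fun k : ℕ => r ^ k) := measurable_from_top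
  have hXmeas : ∀ i, Measurable (X i) := fun i => hmeasr.comp (hmeas i)
  -- single lintegral
  have hXint : ∀ i, ∫⁻ ω, X i ω = ENNReal.ofReal ψ := by
    intro i
    have h1 : ∫⁻ ω, X i ω = ∫⁻ k, r ^ k ∂(Measure.map (Y i) volume) :=
      (lintegral_map hmeasr (hmeas i)).symm
    rw [h1, hiid i, lintegral_countable']
    have h2 : ∀ k : ℕ, r ^ k * Q.toMeasure {k} =
        ENNReal.ofReal ((Q k).toReal * ρ ^ k) := by
      intro k
      rw [Q.toMeasure_apply_singleton k (measurableSet_singleton k),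
        ENNReal.ofReal_mul ENNReal.toReal_nonneg,
        ENNReal.ofReal_toReal (Q.apply_lt_top k).ne, ← ENNReal.ofReal_pow hρ0.le,
        mul_comm]
    simp_rw [h2]
    rw [← ENNReal.ofReal_tsum_of_nonneg
      (fun k => mul_nonneg ENNReal.toReal_nonneg (pow_nonneg hρ0.le k)) hsum]
  -- independence of X
  have hXindep : iIndepFun X volume :=
    hindep.comp (fun _ k => r ^ k) (fun _ => hmeasr)
  -- product lintegral
  have hprod : ∀ m : ℕ, ∫⁻ ω, ∏ i ∈ Finset.range m, X i ω = (ENNReal.ofReal ψ) ^ m := by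
    intro m
    induction m with
    | zero => simp
    | succ v ih =>
      have hind : IndepFun (fun ω => ∏ i ∈ Finset.range v, X i ω) (X v) volume := by
        have h := hXindep.indepFun_prod_range_succ hXmeas v
        rwa [Finset.prod_fn] at h
      calc ∫⁻ ω, ∏ i ∈ Finset.range (v+1), X i ω
          = ∫⁻ ω, (∏ i ∈ Finset.range v, X i ω) * X v ω := by
            simp_rw [Finset.prod_range_succ]
        _ = (∫⁻ ω, ∏ i ∈ Finset.range v, X i ω) * ∫⁻ ω, X v ω :=
            lintegral_mul_eq_lintegral_mul_lintegral_of_indepFun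
              (Finset.measurable_prod _ (fun i _ => hXmeas i)) (hXmeas v) hind
        _ = (ENNReal.ofReal ψ) ^ (v+1) := by rw [ih, hXint v, pow_succ]
  -- subset: event ⊆ {r^n ≤ ∏ X i}
  have hsubset : {ω : Ω | ∀ u : ℕ, 1 ≤ u → (u : ℝ) < t →
      1 + ∑ i ∈ Finset.range u, ((Y i ω : ℤ) - 1) ≠ 0} ⊆
      {ω : Ω | r ^ n ≤ ∏ i ∈ Finset.range n, X i ω} := by
    intro ω hω
    have key : ∀ u : ℕ, u ≤ n → (1:ℤ) ≤ 1 + ∑ i ∈ Finset.range u, ((Y i ω : ℤ) - 1) := by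
      intro u hu
      induction u with
      | zero => simp
      | succ v ih =>
        have hv := ih (le_trans (Nat.le_succ v) hu)
        have hlt : ((v+1 : ℕ) : ℝ) < t := by
          have : ((v+1 : ℕ) : ℝ) ≤ (n : ℝ) := Nat.cast_le.mpr hu
          linarith
        have hne := hω (v+1) (Nat.le_add_left 1 v) hlt
        rw [Finset.sum_range_succ] at hne ⊢
        have hY : (0:ℤ) ≤ (Y v ω : ℤ) := Int.ofNat_nonneg _
        omega
    have hn' : (n : ℤ) ≤ ∑ i ∈ Finset.range n, (Y i ω : ℤ) := by
      have := key n le_rfl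
      rw [Finset.sum_sub_distrib, Finset.sum_const, Finset.card_range] at this
      simpa using this
    have hnat : n ≤ ∑ i ∈ Finset.range n, Y i ω := by
      have : (n : ℤ) ≤ ((∑ i ∈ Finset.range n, Y i ω : ℕ) : ℤ) := by
        rwa [Nat.cast_sum]
      exact_mod_cast this
    have : r ^ n ≤ r ^ (∑ i ∈ Finset.range n, Y i ω) := pow_le_pow_right₀ hr1 hnat
    calc r ^ n ≤ r ^ (∑ i ∈ Finset.range n, Y i ω) := this
      _ = ∏ i ∈ Finset.range n, X i ω := by
          rw [hXdef, ← Finset.prod_pow_eq_pow_sum]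
  -- Markov
  have hmarkov : volume {ω : Ω | r ^ n ≤ ∏ i ∈ Finset.range n, X i ω} ≤
      (ENNReal.ofReal ψ) ^ n / r ^ n := by
    have h1 := mul_meas_ge_le_lintegral₀
      (μ := (volume : Measure Ω))
      (f := fun ω => ∏ i ∈ Finset.range n, X i ω)
      (Finset.measurable_prod _ (fun i _ => hXmeas i)).aemeasurable (r ^ n)
    rw [hprod n] at h1
    rw [ENNReal.le_div_iff_mul_le (Or.inl (pow_ne_zero n hr0))
      (Or.inl (ENNReal.pow_ne_top hrtop)), mul_comm]
    exact h1
  have hle : volume {ω : Ω | ∀ u : ℕ, 1 ≤ u → (u : ℝ) < t →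
      1 + ∑ i ∈ Finset.range u, ((Y i ω : ℤ) - 1) ≠ 0} ≤
      (ENNReal.ofReal ψ) ^ n / r ^ n :=
    le_trans (measure_mono hsubset) hmarkov
  -- pass to reals
  have hpsiρ : ((ENNReal.ofReal ψ) ^ n / r ^ n).toReal = (ψ / ρ) ^ n := by
    rw [ENNReal.toReal_div, ENNReal.toReal_pow, ENNReal.toReal_pow,
      ENNReal.toReal_ofReal hψ0.le, hrdef, ENNReal.toReal_ofReal hρ0.le, div_pow]
  have hfinal : (volume {ω : Ω | ∀ u : ℕ, 1 ≤ u → (u : ℝ) < t →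
      1 + ∑ i ∈ Finset.range u, ((Y i ω : ℤ) - 1) ≠ 0}).toReal ≤ (ψ / ρ) ^ n := by
    rw [← hpsiρ]
    exact ENNReal.toReal_mono
      (ENNReal.div_lt_top (ENNReal.pow_ne_top ENNReal.ofReal_ne_top)
        (pow_ne_zero n hr0)).ne hle
  refine le_trans hfinal ?_
  -- real estimate: (ψ/ρ)^n ≤ ρ * (ψ/ρ)^t
  set b : ℝ := ψ / ρ with hbdef
  have hb0 : 0 < b := div_pos hψ0 hρ0
  have hb1 : b ≤ 1 := (div_le_one hρ0).mpr hsub.le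
  have h1 : (b : ℝ) ^ n = b ^ ((n : ℝ)) := (Real.rpow_natCast b n).symm
  have h2 : b ^ ((n : ℝ)) ≤ b ^ (t - 1) :=
    Real.rpow_le_rpow_of_exponent_ge hb0 hb1 hnge
  have h3 : b ^ (t - 1) = b ^ t / b := by
    rw [Real.rpow_sub hb0, Real.rpow_one]
  have h4 : b ^ t / b ≤ ρ * b ^ t := by
    rw [div_eq_mul_inv, mul_comm]
    apply mul_le_mul_of_nonneg_right _ (Real.rpow_nonneg hb0.le t)
    rw [hbdef, inv_div]
    calc ρ / ψ ≤ ρ / 1 := by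
          apply div_le_div_of_nonneg_left hρ0.le one_pos hψ1
      _ = ρ := div_one ρ
  calc (b:ℝ) ^ n = b ^ ((n:ℝ)) := h1
    _ ≤ b ^ (t-1) := h2
    _ = b ^ t / b := h3
    _ ≤ ρ * b ^ t := h4
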